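/- Let (ν_n)_{n≥0} be a sequence of random probability measures on a Polish space P. For each n, let (A_n, B_n) be two random variables that, conditionally on ν_n, are independent with common distribution ν_n. If (A_n, B_n) converges in distribution to (A, B) where A and B are independent random variables with common deterministic distribution ν, then ν_n converges in distribution to ν for the topology of weak convergence on probability measures on P. -/

import Mathlib

open MeasureTheory Filter Topology

private lemma integrable_of_bdd {α : Type*} [MeasurableSpace α] (μ : Measure α)
    [IsProbabilityMeasure μ] {g : α → ℝ} (hg : AEStronglyMeasurable g μ) {C : ℝ}
    (hC : ∀ b, |g b| ≤ C) : Integrable g μ :=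
  Integrable.mono' (integrable_const C) hg (ae_of_all _ fun b => hC b)

private lemma isProb_bind {α β : Type*} [MeasurableSpace α] [MeasurableSpace β]
    (m : Measure α) [IsProbabilityMeasure m] (κ : α → Measure β) (hκ : Measurable κ)
    (hprob : ∀ a, IsProbabilityMeasure (κ a)) : IsProbabilityMeasure (m.bind κ) := by
  constructor
  rw [Measure.bind_apply MeasurableSet.univ hκ.aemeasurable]
  simp [fun a => (hprob a).measure_univ]

private lemma integral_bind_of_bounded {α β : Type*} [MeasurableSpace α] [MeasurableSpace β]
    (m : Measure α) [IsProbabilityMeasure m] (κ : α → Measure β) (hκ : Measurable κ)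
    (hprob : ∀ a, IsProbabilityMeasure (κ a))
    (g : β → ℝ) (hg : Measurable g) (C : ℝ) (hC0 : 0 ≤ C) (hC : ∀ b, |g b| ≤ C) :
    ∫ b, g b ∂(m.bind κ) = ∫ a, ∫ b, g b ∂(κ a) ∂m := by
  haveI hbp := isProb_bind m κ hκ hprob
  haveI := fun a => hprob a
  -- positive and negative part lintegrals
  set F : α → ENNReal := fun a => ∫⁻ b, ENNReal.ofReal (g b) ∂(κ a) with hF
  set G : α → ENNReal := fun a => ∫⁻ b, ENNReal.ofReal (-g b) ∂(κ a) with hG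
  have hgm : Measurable fun b => ENNReal.ofReal (g b) := ENNReal.measurable_ofReal.comp hg
  have hgm' : Measurable fun b => ENNReal.ofReal (-g b) :=
    ENNReal.measurable_ofReal.comp hg.neg
  have hFmeas : Measurable F := (Measure.measurable_lintegral hgm).comp hκ
  have hGmeas : Measurable G := (Measure.measurable_lintegral hgm').comp hκ
  have hFle : ∀ a, F a ≤ ENNReal.ofReal C := by
    intro a
    calc F a ≤ ∫⁻ _, ENNReal.ofReal C ∂(κ a) := by
          apply lintegral_mono
          intro b
          exact ENNReal.ofReal_le_ofReal (le_trans (le_abs_self _) (hC b))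
      _ = ENNReal.ofReal C := by simp
  have hGle : ∀ a, G a ≤ ENNReal.ofReal C := by
    intro a
    calc G a ≤ ∫⁻ _, ENNReal.ofReal C ∂(κ a) := by
          apply lintegral_mono
          intro b
          exact ENNReal.ofReal_le_ofReal (le_trans (neg_le_abs _) (hC b))
      _ = ENNReal.ofReal C := by simp
  have hFfin : ∀ a, F a < ⊤ := fun a => lt_of_le_of_lt (hFle a) ENNReal.ofReal_lt_top
  have hGfin : ∀ a, G a < ⊤ := fun a => lt_of_le_of_lt (hGle a) ENNReal.ofReal_lt_top
  have hint : ∀ (μ : Measure β), IsProbabilityMeasure μ → Integrable g μ := fun μ hμ =>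
    integrable_of_bdd μ hg.aestronglyMeasurable hC
  rw [integral_eq_lintegral_pos_part_sub_lintegral_neg_part (hint _ hbp),
    Measure.lintegral_bind hκ.aemeasurable hgm.aemeasurable, Measure.lintegral_bind hκ.aemeasurable hgm'.aemeasurable]
  have hinner : ∀ a, ∫ b, g b ∂(κ a) = (F a).toReal - (G a).toReal := fun a =>
    integral_eq_lintegral_pos_part_sub_lintegral_neg_part (hint _ (hprob a))
  have hFint : Integrable (fun a => (F a).toReal) m := by
    apply integrable_of_bdd m hFmeas.ennreal_toReal.aestronglyMeasurable (C := C)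
    intro a
    rw [abs_of_nonneg ENNReal.toReal_nonneg]
    exact ENNReal.toReal_le_of_le_ofReal hC0 (hFle a)
  have hGint : Integrable (fun a => (G a).toReal) m := by
    apply integrable_of_bdd m hGmeas.ennreal_toReal.aestronglyMeasurable (C := C)
    intro a
    rw [abs_of_nonneg ENNReal.toReal_nonneg]
    exact ENNReal.toReal_le_of_le_ofReal hC0 (hGle a)
  calc (∫⁻ a, F a ∂m).toReal - (∫⁻ a, G a ∂m).toReal
      = (∫ a, (F a).toReal ∂m) - ∫ a, (G a).toReal ∂m := by
        rw [integral_toReal hFmeas.aemeasurable (ae_of_all _ hFfin),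
          integral_toReal hGmeas.aemeasurable (ae_of_all _ hGfin)]
    _ = ∫ a, ((F a).toReal - (G a).toReal) ∂m := (integral_sub hFint hGint).symm
    _ = ∫ a, ∫ b, g b ∂(κ a) ∂m := by
        apply integral_congr_ae
        exact ae_of_all _ fun a => (hinner a).symm

/-- If `(A_n, B_n)` drawn (conditionally i.i.d.) from random probability
measures `ν n` converge in distribution to an independent pair with common deterministic
law `νlim`, then `ν n` converges in probability (hence in distribution) to `νlim` for the
weak topology. -/
theorem stmt_0 {P : Type*} [MetricSpace P] [PolishSpace P] [MeasurableSpace P] [BorelSpace P]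
    {Ω : Type*} [MeasurableSpace Ω] (ℙ : Measure Ω) [IsProbabilityMeasure ℙ]
    (ν : ℕ → Ω → Measure P) (hprob : ∀ n ω, IsProbabilityMeasure (ν n ω))
    (hmeas : ∀ n, Measurable (ν n))
    (νlim : Measure P) [IsProbabilityMeasure νlim]
    (hconv : ∀ g : P × P → ℝ, Continuous g → (∃ C, ∀ p, |g p| ≤ C) →
      Tendsto (fun n => ∫ p, g p ∂(ℙ.bind (fun ω => (ν n ω).prod (ν n ω))))
        atTop (𝓝 (∫ p, g p ∂(νlim.prod νlim)))) :
    ∀ Φ : P → ℝ, Continuous Φ → (∃ C, ∀ x, |Φ x| ≤ C) →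
      ∀ ε : ℝ, 0 < ε →
        Tendsto (fun n => ℙ {ω | ε ≤ |(∫ x, Φ x ∂(ν n ω)) - ∫ x, Φ x ∂νlim|})
          atTop (𝓝 0) := by
  intro Φ hΦc hΦb ε hε
  obtain ⟨C, hC⟩ := hΦb
  haveI := fun n ω => hprob n ω
  set m0 : ℝ := ∫ x, Φ x ∂νlim with hm0
  set Ψ : P → ℝ := fun x => Φ x - m0 with hΨ
  have hΨc : Continuous Ψ := hΦc.sub continuous_const
  set C' : ℝ := C + |m0| with hC'
  have hP : Nonempty P := by
    by_contra h
    have he : (Set.univ : Set P) = ∅ := Set.univ_eq_empty_iff.mpr (not_nonempty_iff.mp h)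
    have h1 : νlim Set.univ = 1 := measure_univ
    rw [he] at h1
    simp at h1
  have hC0 : 0 ≤ C := le_trans (abs_nonneg _) (hC hP.some)
  have hC'0 : 0 ≤ C' := add_nonneg hC0 (abs_nonneg _)
  have hΨb : ∀ x, |Ψ x| ≤ C' := fun x =>
    le_trans (abs_sub _ _) (add_le_add (hC x) le_rfl)
  set g : P × P → ℝ := fun p => Ψ p.1 * Ψ p.2 with hg
  have hgc : Continuous g := (hΨc.comp continuous_fst).mul (hΨc.comp continuous_snd)
  have hgb : ∀ p, |g p| ≤ C' * C' := by
    intro p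
    simp only [hg, abs_mul]
    exact mul_le_mul (hΨb _) (hΨb _) (abs_nonneg _) hC'0
  -- integral of Ψ against a probability measure
  have hΨint : ∀ (μ : Measure P), IsProbabilityMeasure μ →
      ∫ x, Ψ x ∂μ = (∫ x, Φ x ∂μ) - m0 := by
    intro μ hμ
    rw [hΨ]
    rw [integral_sub (integrable_of_bdd μ hΦc.aestronglyMeasurable hC) (integrable_const m0)]
    simp
  -- the limit integral is 0
  have hlim0 : ∫ p, g p ∂(νlim.prod νlim) = 0 := by
    rw [hg, integral_prod_mul, hΨint νlim inferInstance]
    simp [hm0]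
  -- measurability of the prod-kernel
  set Y : ℕ → Ω → ℝ := fun n ω => (∫ x, Φ x ∂(ν n ω)) - m0 with hY
  have hYmeas : ∀ n, Measurable (Y n) := by
    intro n
    let K : ProbabilityTheory.Kernel Ω P := ⟨ν n, hmeas n⟩
    haveI : ProbabilityTheory.IsMarkovKernel K := ⟨fun ω => hprob n ω⟩
    have h1 : StronglyMeasurable fun ω => ∫ x, Φ x ∂(K ω) := by
      apply MeasureTheory.StronglyMeasurable.integral_kernel_prod_right
        (κ := K) (f := fun _ x => Φ x)
      exact hΦc.stronglyMeasurable.comp_measurable measurable_snd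
    exact (h1.measurable).sub measurable_const
  have hYb : ∀ n ω, |Y n ω| ≤ C' := by
    intro n ω
    simp only [hY]
    rw [← hΨint (ν n ω) inferInstance]
    calc |∫ x, Ψ x ∂(ν n ω)| ≤ ∫ x, |Ψ x| ∂(ν n ω) := by simpa using norm_integral_le_integral_norm (μ := ν n ω) Ψ
      _ ≤ ∫ _, C' ∂(ν n ω) := by
          apply integral_mono
          · exact (integrable_of_bdd _ hΨc.aestronglyMeasurable hΨb).abs
          · exact integrable_const C'
          · exact hΨb
      _ = C' := by simp
  -- the bind integral is the expectation of Y^2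
  set V : ℕ → ℝ := fun n => ∫ ω, (Y n ω) ^ 2 ∂ℙ with hV
  have hbind : ∀ n, ∫ p, g p ∂(ℙ.bind (fun ω => (ν n ω).prod (ν n ω))) = V n := by
    intro n
    have hκmeas : Measurable fun ω => (ν n ω).prod (ν n ω) := by
      let K : ProbabilityTheory.Kernel Ω P := ⟨ν n, hmeas n⟩
      haveI : ProbabilityTheory.IsMarkovKernel K := ⟨fun ω => hprob n ω⟩
      have he : (fun ω => (ν n ω).prod (ν n ω)) = fun ω => (K.prod K) ω := by
        funext ω
        rw [ProbabilityTheory.Kernel.prod_apply]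
        rfl
      rw [he]
      exact (K.prod K).measurable
    rw [integral_bind_of_bounded ℙ _ hκmeas (fun ω => by infer_instance) g hgc.measurable
      (C' * C') (mul_nonneg hC'0 hC'0) hgb]
    apply integral_congr_ae
    apply ae_of_all
    intro ω
    simp only [hg, hY]
    rw [integral_prod_mul, hΨint (ν n ω) inferInstance, sq]
  -- V tends to 0
  have hVtendsto : Tendsto V atTop (𝓝 0) := by
    have := hconv g hgc ⟨C' * C', hgb⟩
    rw [hlim0] at this
    simpa only [hbind] using this
  -- Chebyshev bound
  have hY2b : ∀ n ω, |(Y n ω) ^ 2| ≤ C' ^ 2 := by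
    intro n ω
    rw [abs_of_nonneg (sq_nonneg _), ← sq_abs]
    exact pow_le_pow_left₀ (abs_nonneg _) (hYb n ω) 2
  have hY2int : ∀ n, Integrable (fun ω => (Y n ω) ^ 2) ℙ := fun n =>
    integrable_of_bdd ℙ (((hYmeas n).pow_const 2).aestronglyMeasurable) (hY2b n)
  -- Chebyshev: ℙ {ε ≤ |Y n|} ≤ ofReal (V n) / ofReal (ε^2)
  have hcheb : ∀ n, ℙ {ω | ε ≤ |Y n ω|} ≤ ENNReal.ofReal (V n) / ENNReal.ofReal (ε ^ 2) := by
    intro n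
    have hsub : {ω | ε ≤ |Y n ω|} ⊆
        {ω | ENNReal.ofReal (ε ^ 2) ≤ ENNReal.ofReal ((Y n ω) ^ 2)} := by
      intro ω hω
      have h1 : ε ^ 2 ≤ (Y n ω) ^ 2 := by
        rw [← sq_abs (Y n ω)]
        exact pow_le_pow_left₀ hε.le hω 2
      exact ENNReal.ofReal_le_ofReal h1
    have hmble : AEMeasurable (fun ω => ENNReal.ofReal ((Y n ω) ^ 2)) ℙ :=
      (ENNReal.measurable_ofReal.comp ((hYmeas n).pow_const 2)).aemeasurable
    have h2 := meas_ge_le_lintegral_div hmble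
      (ε := ENNReal.ofReal (ε ^ 2))
      (by simp [ENNReal.ofReal_eq_zero, not_le, pow_pos hε, hε.ne']) ENNReal.ofReal_ne_top
    have h3 : ∫⁻ ω, ENNReal.ofReal ((Y n ω) ^ 2) ∂ℙ = ENNReal.ofReal (V n) := by
      rw [← ofReal_integral_eq_lintegral_ofReal (hY2int n) (ae_of_all _ fun ω => sq_nonneg _)]
    calc ℙ {ω | ε ≤ |Y n ω|}
        ≤ ℙ {ω | ENNReal.ofReal (ε ^ 2) ≤ ENNReal.ofReal ((Y n ω) ^ 2)} := measure_mono hsub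
      _ ≤ (∫⁻ ω, ENNReal.ofReal ((Y n ω) ^ 2) ∂ℙ) / ENNReal.ofReal (ε ^ 2) := h2
      _ = ENNReal.ofReal (V n) / ENNReal.ofReal (ε ^ 2) := by rw [h3]
  have hupper : Tendsto (fun n => ENNReal.ofReal (V n) / ENNReal.ofReal (ε ^ 2)) atTop (𝓝 0) := by
    have h0 : Tendsto (fun n => ENNReal.ofReal (V n)) atTop (𝓝 0) := by
      have := ENNReal.tendsto_ofReal hVtendsto
      simpa using this
    simpa using ENNReal.Tendsto.div_const h0 (Or.inr (by simp [ENNReal.ofReal_eq_zero, not_le, pow_pos hε, hε.ne']))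
  exact tendsto_of_tendsto_of_tendsto_of_le_of_le tendsto_const_nhds hupper
    (fun n => zero_le) hcheb
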